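/- Let α > 0, μ = ±1, A ∈ ℂ \ {0}, n ∈ ℤ \ {0}, s ∈ ℝ, and fix t ∈ ℝ. Let u(t) be the exact plane-wave solution of the fractional NLS with datum u₀(x) = A|n|^{−s} e^{inx}, and let u_h(t) = S_h(t) d_h u₀ be the corresponding exact plane-wave solution of the fractional discrete NLS. Then, as h → 0 along h = π/M, the discrete L² error satisfies ‖u_h(t) − d_h u(t)‖_{L²_h} = ( (√(2π)/24) |A| |t| |n|^{2−3s} · | α|n|^{α+2s} + 2μ|A|² | ) h² + O(h³); in particular the discretized error converges quadratically in h. -/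

import Mathlib

open scoped BigOperators ENNReal NNReal
open MeasureTheory

noncomputable section

/-- Mesh size `h = π / M`. -/
def mesh (M : ℕ) : ℝ := Real.pi / M

/-- Index set `{-M, …, M-1}` for the periodic lattice `𝕋_h` and its dual `𝕋_h*`. -/
def idx (M : ℕ) : Finset ℤ := Finset.Icc (-(M : ℤ)) ((M : ℤ) - 1)

/-- Lattice point `x = h j`. -/
def pt (M : ℕ) (j : ℤ) : ℝ := mesh M * j

/-- Discrete `L^p_h` norm (finite `p`), w.r.t. the normalized counting measure. -/
def dLp (M : ℕ) (p : ℝ) (f : ℤ → ℂ) : ℝ :=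
  (mesh M * ∑ j ∈ idx M, ‖f j‖ ^ p) ^ (1 / p)

/-- Discrete `L^∞_h` norm. -/
def dLinf (M : ℕ) (f : ℤ → ℂ) : ℝ :=
  ⨆ j : (idx M), ‖f (j : ℤ)‖

/-- Discrete Fourier transform `𝓕_h f (k) = h ∑_{x ∈ 𝕋_h} f(x) e^{-ikx}`. -/
def dFT (M : ℕ) (f : ℤ → ℂ) (k : ℤ) : ℂ :=
  (mesh M : ℂ) * ∑ j ∈ idx M, f j * Complex.exp (-Complex.I * (k : ℂ) * (pt M j : ℂ))

/-- Discrete Sobolev norm `‖f‖_{H^s_h}`. -/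
def dSob (M : ℕ) (s : ℝ) (f : ℤ → ℂ) : ℝ :=
  Real.sqrt ((2 * Real.pi)⁻¹ * ∑ k ∈ idx M, (1 + (k : ℝ) ^ 2) ^ s * ‖dFT M f k‖ ^ 2)

/-- Symbol `σ_h(ξ) = |(2/h) sin(hξ/2)|^α` of the discrete fractional Laplacian. -/
def dsymb (M : ℕ) (α ξ : ℝ) : ℝ := |2 / mesh M * Real.sin (mesh M * ξ / 2)| ^ α

/-- Discrete linear propagator `U_h(t) = e^{-it(-Δ_h)^{α/2}}`. -/
def Uh (M : ℕ) (α t : ℝ) (f : ℤ → ℂ) (j : ℤ) : ℂ :=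
  (2 * Real.pi)⁻¹ * ∑ k ∈ idx M,
    Complex.exp (-Complex.I * (t : ℂ) * ((dsymb M α k : ℝ) : ℂ)) * dFT M f k *
      Complex.exp (Complex.I * (k : ℂ) * (pt M j : ℂ))

/-- Fourier coefficient on the torus `𝕋 = [-π, π)`. -/
def fCoef (f : ℝ → ℂ) (k : ℤ) : ℂ :=
  ∫ x in (-Real.pi)..Real.pi, f x * Complex.exp (-Complex.I * (k : ℂ) * (x : ℂ))

/-- `L²(𝕋)` norm. -/
def cL2 (f : ℝ → ℂ) : ℝ :=
  Real.sqrt (∫ x in (-Real.pi)..Real.pi, ‖f x‖ ^ 2)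

/-- Sobolev `H^s(𝕋)` norm. -/
def cSob (s : ℝ) (f : ℝ → ℂ) : ℝ :=
  Real.sqrt ((2 * Real.pi)⁻¹ * ∑' k : ℤ, (1 + (k : ℝ) ^ 2) ^ s * ‖fCoef f k‖ ^ 2)

/-- Membership in `H^s(𝕋)`. -/
def inHs (s : ℝ) (f : ℝ → ℂ) : Prop :=
  Summable fun k : ℤ => (1 + (k : ℝ) ^ 2) ^ s * ‖fCoef f k‖ ^ 2

/-- Continuum propagator `U(t) = e^{-it(-Δ)^{α/2}}` on the torus. -/
def Uc (α t : ℝ) (f : ℝ → ℂ) (x : ℝ) : ℂ :=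
  (2 * Real.pi)⁻¹ * ∑' k : ℤ,
    Complex.exp (-Complex.I * (t : ℂ) * ((|(k : ℝ)| ^ α : ℝ) : ℂ)) * fCoef f k *
      Complex.exp (Complex.I * (k : ℂ) * (x : ℂ))

/-- Discretization operator `d_h f (x) = h⁻¹ ∫_x^{x+h} f`. -/
def dh (M : ℕ) (f : ℝ → ℂ) (j : ℤ) : ℂ :=
  ((mesh M : ℝ) : ℂ)⁻¹ * ∫ x in (pt M j)..(pt M j + mesh M), f x

/-- Linear interpolation operator `p_h`. -/
def ph (M : ℕ) (g : ℤ → ℂ) (x : ℝ) : ℂ :=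
  g ⌊x / mesh M⌋ + (g (⌊x / mesh M⌋ + 1) - g ⌊x / mesh M⌋) *
    (((x - pt M ⌊x / mesh M⌋) / mesh M : ℝ) : ℂ)

/-- Cubic nonlinearity `|f|² f` on the lattice. -/
def cubic (f : ℤ → ℂ) (j : ℤ) : ℂ := ((‖f j‖ ^ 2 : ℝ) : ℂ) * f j

/-- Cubic nonlinearity `|f|² f` on the torus. -/
def cubicC (f : ℝ → ℂ) (x : ℝ) : ℂ := ((‖f x‖ ^ 2 : ℝ) : ℂ) * f x

/-- `u` solves the fractional discrete NLS with datum `u0` on the time set `I`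
(Duhamel formulation). -/
def IsDSol (M : ℕ) (α μ : ℝ) (I : Set ℝ) (u0 : ℤ → ℂ) (u : ℝ → ℤ → ℂ) : Prop :=
  (∀ j : ℤ, u 0 j = u0 j) ∧
  ∀ t ∈ I, ∀ j : ℤ, u t j =
    Uh M α t u0 j - Complex.I * (μ : ℂ) * ∫ τ in (0:ℝ)..t, Uh M α (t - τ) (cubic (u τ)) j

/-- `u` solves the fractional NLS on the torus with datum `u0` on the time set `I`
(Duhamel formulation). -/
def IsCSol (α μ : ℝ) (I : Set ℝ) (u0 : ℝ → ℂ) (u : ℝ → ℝ → ℂ) : Prop :=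
  (∀ x : ℝ, u 0 x = u0 x) ∧
  ∀ t ∈ I, ∀ x : ℝ, u t x =
    Uc α t u0 x - Complex.I * (μ : ℂ) * ∫ τ in (0:ℝ)..t, Uc α (t - τ) (cubicC (u τ)) x


/-- The exact plane-wave solution of the fractional NLS with datum `A|n|^{-s} e^{inx}`. -/
def planeWave (α μ s : ℝ) (A : ℂ) (n : ℤ) (t x : ℝ) : ℂ :=
  A * ((|(n : ℝ)| ^ (-s) : ℝ) : ℂ) *
    Complex.exp (-Complex.I * (t : ℂ) *
      ((|(n : ℝ)| ^ α + μ * ‖A‖ ^ 2 * |(n : ℝ)| ^ (-2 * s) : ℝ) : ℂ)) *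
    Complex.exp (Complex.I * (n : ℂ) * (x : ℂ))

/-- `B = (e^{ihn} - 1)/(ihn)`. -/
def Bfac (M : ℕ) (n : ℤ) : ℂ :=
  (Complex.exp (Complex.I * (mesh M : ℂ) * (n : ℂ)) - 1) / (Complex.I * (mesh M : ℂ) * (n : ℂ))

/-- The exact plane-wave solution of the fractional discrete NLS with datum `d_h u₀`. -/
def planeWaveD (M : ℕ) (α μ s : ℝ) (A : ℂ) (n : ℤ) (t : ℝ) (j : ℤ) : ℂ :=
  A * ((|(n : ℝ)| ^ (-s) : ℝ) : ℂ) * Bfac M n *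
    Complex.exp (-Complex.I * (t : ℂ) *
      ((|2 / mesh M * Real.sin (mesh M * n / 2)| ^ α
        + μ * ‖A‖ ^ 2 * |(n : ℝ)| ^ (-2 * s) * ‖Bfac M n‖ ^ 2 : ℝ) : ℂ)) *
    Complex.exp (Complex.I * (n : ℂ) * ((pt M j : ℝ) : ℂ))

lemma auxA (β : ℝ) {x : ℝ} (h1 : 1/2 ≤ x) (h2 : x ≤ 1) :
    x ^ β ≤ max 1 ((1/2 : ℝ) ^ β) := by
  rcases le_or_gt 0 β with hβ | hβ
  · exact le_max_of_le_left (Real.rpow_le_one (by linarith) h2 hβ)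
  · exact le_max_of_le_right (Real.rpow_le_rpow_of_nonpos (by norm_num) h1 hβ.le)

lemma auxB (β : ℝ) {x : ℝ} (h1 : 1/2 ≤ x) (h2 : x ≤ 1) :
    |x ^ β - 1| ≤ (|β| * max 1 ((1/2 : ℝ) ^ (β - 1))) * (1 - x) := by
  have hs : Convex ℝ (Set.Icc (1/2 : ℝ) 1) := convex_Icc _ _
  have key := hs.norm_image_sub_le_of_norm_hasDerivWithin_le
    (f := fun t : ℝ => t ^ β) (f' := fun t : ℝ => β * t ^ (β - 1))
    (fun t ht => (Real.hasDerivAt_rpow_const (Or.inl (by rw [Set.mem_Icc] at ht; linarith))).hasDerivWithinAt)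
    (C := |β| * max 1 ((1/2 : ℝ) ^ (β - 1)))
    (fun t ht => by
      rw [Set.mem_Icc] at ht
      have h0 : (0:ℝ) ≤ t ^ (β - 1) := Real.rpow_nonneg (by linarith) _
      have := auxA (β - 1) ht.1 ht.2
      show ‖β * t ^ (β - 1)‖ ≤ |β| * max 1 ((1/2 : ℝ) ^ (β - 1))
      rw [Real.norm_eq_abs, abs_mul, abs_of_nonneg h0]
      exact mul_le_mul_of_nonneg_left this (abs_nonneg _))
    (x := (1:ℝ)) (y := x) (Set.mem_Icc.mpr (by norm_num)) (Set.mem_Icc.mpr ⟨h1, h2⟩)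
  simp only [Real.one_rpow, Real.norm_eq_abs] at key
  rw [abs_sub_comm x 1, abs_of_nonneg (by linarith : (0:ℝ) ≤ 1 - x)] at key
  exact key

lemma auxC (α : ℝ) (hα : 0 < α) {g : ℝ} (h1 : 1/2 ≤ g) (h2 : g ≤ 1) :
    |g ^ α - (1 - α * (1 - g))| ≤
      (α * (|α - 1| * max 1 ((1/2 : ℝ) ^ (α - 2)))) * (1 - g) ^ 2 := by
  set D : ℝ := |α - 1| * max 1 ((1/2 : ℝ) ^ (α - 2)) with hD
  have hDnn : (0:ℝ) ≤ D :=
    mul_nonneg (abs_nonneg _) (le_trans zero_le_one (le_max_left _ _))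
  have hs : Convex ℝ (Set.Icc g 1) := convex_Icc _ _
  have key := hs.norm_image_sub_le_of_norm_hasDerivWithin_le
    (f := fun t : ℝ => t ^ α - α * t) (f' := fun t : ℝ => α * t ^ (α - 1) - α)
    (fun t ht => by
      rw [Set.mem_Icc] at ht
      have hd1 : HasDerivAt (fun t : ℝ => t ^ α) (α * t ^ (α - 1)) t :=
        Real.hasDerivAt_rpow_const (Or.inl (by linarith))
      have hd2 : HasDerivAt (fun t : ℝ => α * t) α t := by
        simpa using (hasDerivAt_id t).const_mul α
      exact (hd1.sub hd2).hasDerivWithinAt)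
    (C := α * (D * (1 - g)))
    (fun t ht => by
      rw [Set.mem_Icc] at ht
      have hb := auxB (α - 1) (by linarith : 1/2 ≤ t) ht.2
      rw [show α - 1 - 1 = α - 2 by ring] at hb
      show ‖α * t ^ (α - 1) - α‖ ≤ _
      rw [Real.norm_eq_abs, show α * t ^ (α - 1) - α = α * (t ^ (α - 1) - 1) by ring,
        abs_mul, abs_of_pos hα]
      refine mul_le_mul_of_nonneg_left (le_trans hb ?_) hα.le
      exact mul_le_mul_of_nonneg_left (by linarith [ht.1]) hDnn)
    (x := (1:ℝ)) (y := g) (Set.mem_Icc.mpr ⟨h2, le_refl 1⟩) (Set.mem_Icc.mpr ⟨le_refl g, h2⟩)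
  simp only [Real.one_rpow, Real.norm_eq_abs] at key
  have he : g ^ α - α * g - (1 - α * 1) = g ^ α - (1 - α * (1 - g)) := by ring
  rw [he, abs_sub_comm g 1, abs_of_nonneg (by linarith : (0:ℝ) ≤ 1 - g)] at key
  calc |g ^ α - (1 - α * (1 - g))| ≤ α * (D * (1 - g)) * (1 - g) := key
    _ = α * D * (1 - g) ^ 2 := by ring

lemma hBfac (M : ℕ) (n : ℤ) {y : ℝ} (hy2 : mesh M * n = 2 * y) (hy : y ≠ 0) :
    Bfac M n = Complex.exp ((y : ℂ) * Complex.I) * ((Real.sin y / y : ℝ) : ℂ) := by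
  have hyC : ((y : ℂ)) ≠ 0 := Complex.ofReal_ne_zero.mpr hy
  have hy2C : (mesh M : ℂ) * (n : ℂ) = 2 * (y : ℂ) := by
    have := congrArg (fun r : ℝ => (r : ℂ)) hy2
    push_cast at this; exact this
  have h1 : Complex.I * (mesh M : ℂ) * (n : ℂ) = 2 * (y:ℂ) * Complex.I := by
    rw [mul_assoc, hy2C]; ring
  have h3 : Complex.exp ((y:ℂ)*Complex.I) * Complex.exp (-(y:ℂ)*Complex.I) = 1 := by
    rw [← Complex.exp_add]; ring_nf; exact Complex.exp_zero
  have h4 : Complex.exp ((y:ℂ)*Complex.I) - Complex.exp (-(y:ℂ)*Complex.I)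
      = 2 * (Real.sin y : ℂ) * Complex.I := by
    rw [Complex.exp_mul_I, Complex.exp_mul_I, Complex.cos_neg, Complex.sin_neg,
      ← Complex.ofReal_sin]
    ring
  have h5 : Complex.exp ((y:ℂ)*Complex.I) * Complex.exp ((y:ℂ)*Complex.I) - 1
      = Complex.exp ((y:ℂ)*Complex.I) * (2 * (Real.sin y : ℂ) * Complex.I) := by
    rw [← h4, mul_sub, h3]
  have h2 : Complex.exp (2 * (y:ℂ) * Complex.I)
      = Complex.exp ((y:ℂ)*Complex.I) * Complex.exp ((y:ℂ)*Complex.I) := by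
    rw [← Complex.exp_add]; ring_nf
  rw [Bfac, h1, h2, h5, Complex.ofReal_div]
  field_simp

lemma hdh_gen (M : ℕ) (hM : mesh M ≠ 0) (n : ℤ) (hn : n ≠ 0) (c : ℂ) (j : ℤ) :
    dh M (fun x : ℝ => c * Complex.exp (Complex.I * (n : ℂ) * (x : ℂ))) j
      = c * Bfac M n * Complex.exp (Complex.I * (n : ℂ) * ((pt M j : ℝ) : ℂ)) := by
  have hnC : ((n : ℂ)) ≠ 0 := Int.cast_ne_zero.mpr hn
  have hc : (Complex.I * (n : ℂ)) ≠ 0 := mul_ne_zero Complex.I_ne_zero hnC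
  have hMC : ((mesh M : ℝ) : ℂ) ≠ 0 := Complex.ofReal_ne_zero.mpr hM
  rw [dh, intervalIntegral.integral_const_mul, integral_exp_mul_complex hc]
  have he : Complex.exp (Complex.I * (n : ℂ) * ((pt M j + mesh M : ℝ) : ℂ))
      = Complex.exp (Complex.I * (n : ℂ) * ((pt M j : ℝ) : ℂ)) *
        Complex.exp (Complex.I * (mesh M : ℂ) * (n : ℂ)) := by
    rw [← Complex.exp_add]; push_cast; ring_nf
  rw [Bfac, he]
  field_simp

lemma hdLp (M : ℕ) (hM : 1 ≤ M) (f : ℤ → ℂ) (c0 : ℝ) (hc0 : 0 ≤ c0)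
    (habs : ∀ j ∈ idx M, ‖f j‖ = c0) :
    dLp M 2 f = Real.sqrt (2 * Real.pi) * c0 := by
  have hMR : ((M : ℝ)) ≠ 0 := Nat.cast_ne_zero.mpr (by omega)
  have hcard : (idx M).card = 2 * M := by
    rw [idx, Int.card_Icc]
    omega
  have hsum : ∑ j ∈ idx M, ‖f j‖ ^ (2:ℝ) = (2 * M : ℕ) * c0 ^ 2 := by
    rw [Finset.sum_congr rfl (fun j hj => by rw [habs j hj]), Finset.sum_const, hcard,
      nsmul_eq_mul, Real.rpow_two]
  rw [dLp, hsum]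
  have : mesh M * ((2 * M : ℕ) * c0 ^ 2) = 2 * Real.pi * c0 ^ 2 := by
    rw [mesh]; push_cast; field_simp
  rw [this, show (1 : ℝ) / 2 = (1:ℝ)/2 from rfl, ← Real.sqrt_eq_rpow,
    Real.sqrt_mul (by positivity : (0:ℝ) ≤ 2 * Real.pi), Real.sqrt_sq hc0]

lemma hsinc {y : ℝ} (hy : y ≠ 0) (h1 : |y| ≤ 1) :
    |Real.sin y / y - (1 - y^2/6)| ≤ 5 * |y|^3 / 96 := by
  have hb := Real.sin_bound h1
  have hy0 : (0:ℝ) < |y| := abs_pos.mpr hy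
  have he : Real.sin y / y - (1 - y^2/6) = (Real.sin y - (y - y^3/6)) / y := by
    field_simp
  rw [he, abs_div]
  rw [div_le_div_iff₀ hy0 (by norm_num : (0:ℝ) < 96)]
  calc |Real.sin y - (y - y ^ 3 / 6)| * 96 ≤ |y|^4 * (5/96) * 96 := by
        have h4 : |y|^5/100 ≤ |y|^4 * (5/96) := by
          have := pow_le_pow_of_le_one (abs_nonneg y) h1 (by norm_num : 4 ≤ 5)
          nlinarith [pow_nonneg (abs_nonneg y) 4]
        exact mul_le_mul_of_nonneg_right (le_trans hb h4) (by norm_num)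
    _ = 5 * |y|^3 * |y| := by ring

lemma habs1 (z : ℂ) (hz : z.re = 0) : ‖Complex.exp z‖ = 1 := by
  rw [Complex.norm_exp, hz, Real.exp_zero]

lemma hdiffId (M : ℕ) (hM : mesh M ≠ 0) (α μ s t : ℝ) (A : ℂ) (n : ℤ) (hn : n ≠ 0) (j : ℤ) :
    planeWaveD M α μ s A n t j - dh M (planeWave α μ s A n t) j
      = A * ((|(n : ℝ)| ^ (-s) : ℝ) : ℂ) * Bfac M n *
        (Complex.exp (-Complex.I * (t : ℂ) *
            ((|2 / mesh M * Real.sin (mesh M * n / 2)| ^ α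
              + μ * ‖A‖ ^ 2 * |(n : ℝ)| ^ (-2 * s) * ‖Bfac M n‖ ^ 2 : ℝ) : ℂ))
          - Complex.exp (-Complex.I * (t : ℂ) *
            ((|(n : ℝ)| ^ α + μ * ‖A‖ ^ 2 * |(n : ℝ)| ^ (-2 * s) : ℝ) : ℂ))) *
        Complex.exp (Complex.I * (n : ℂ) * ((pt M j : ℝ) : ℂ)) := by
  have h1 : planeWave α μ s A n t = fun x : ℝ =>
      (A * ((|(n : ℝ)| ^ (-s) : ℝ) : ℂ) * Complex.exp (-Complex.I * (t : ℂ) *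
        ((|(n : ℝ)| ^ α + μ * ‖A‖ ^ 2 * |(n : ℝ)| ^ (-2 * s) : ℝ) : ℂ))) *
        Complex.exp (Complex.I * (n : ℂ) * (x : ℂ)) := rfl
  rw [h1, hdh_gen M hM n hn _ j, planeWaveD]
  ring

lemma re_neg_I (a b : ℝ) : (-Complex.I * (a : ℂ) * (b : ℂ)).re = 0 := by
  simp

lemma re_I_int (n : ℤ) (x : ℝ) : (Complex.I * (n : ℂ) * (x : ℂ)).re = 0 := by
  simp

set_option maxHeartbeats 2000000 in
/-- equation (4.10): sharp quadratic convergence of the discretized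
plane-wave error in `L²_h`. -/
theorem statement17 (α μ s t : ℝ) (hα : 0 < α) (hμ : μ = 1 ∨ μ = -1)
    (A : ℂ) (hA : A ≠ 0) (n : ℤ) (hn : n ≠ 0) :
    ∃ C > (0:ℝ), ∃ M₀ : ℕ, ∀ M : ℕ, M₀ ≤ M →
      |dLp M 2 (fun j => planeWaveD M α μ s A n t j - dh M (planeWave α μ s A n t) j)
          - Real.sqrt (2 * Real.pi) / 24 * ‖A‖ * |t| * |(n : ℝ)| ^ (2 - 3 * s) *
              |α * |(n : ℝ)| ^ (α + 2 * s) + 2 * μ * ‖A‖ ^ 2| * mesh M ^ 2|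
        ≤ C * mesh M ^ 3 := by
  have hπ := Real.pi_pos
  have hA0 : 0 < ‖A‖ := norm_pos_iff.mpr hA
  obtain ⟨na, hna⟩ : ∃ x : ℝ, x = |(n : ℝ)| := ⟨_, rfl⟩
  have hna1 : (1:ℝ) ≤ na := by
    rw [hna, ← Int.cast_abs]; exact_mod_cast Int.one_le_abs hn
  have hna0 : (0:ℝ) < na := lt_of_lt_of_le one_pos hna1
  set K' : ℝ := na ^ (-s) with hK'
  have hK0 : 0 < K' := by rw [hK']; exact Real.rpow_pos_of_pos hna0 _
  have hμ1 : |μ| = 1 := by rcases hμ with h | h <;> rw [h] <;> norm_num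
  obtain ⟨C0, hC0def⟩ : ∃ x : ℝ, x = α * (|α - 1| * max 1 ((1/2 : ℝ) ^ (α - 2))) := ⟨_, rfl⟩
  have hC00 : 0 ≤ C0 := by
    rw [hC0def]
    have : (0:ℝ) ≤ max 1 ((1/2 : ℝ) ^ (α - 2)) := le_trans zero_le_one (le_max_left _ _)
    positivity
  obtain ⟨C2, hC2def⟩ : ∃ x : ℝ, x = na ^ α * (C0 + α) + ‖A‖ ^ 2 * na ^ (-2*s) := ⟨_, rfl⟩
  have hC20 : 0 ≤ C2 := by
    rw [hC2def]
    have h1 : (0:ℝ) ≤ na ^ α := (Real.rpow_pos_of_pos hna0 _).le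
    have h2 : (0:ℝ) ≤ na ^ (-2*s) := (Real.rpow_pos_of_pos hna0 _).le
    exact add_nonneg (mul_nonneg h1 (add_nonneg hC00 hα.le)) (mul_nonneg (sq_nonneg _) h2)
  obtain ⟨cc, hccdef⟩ : ∃ x : ℝ, x = (n:ℝ)^2/24 * (α * na ^ α + 2 * (μ * ‖A‖^2 * na ^ (-2*s))) := ⟨_, rfl⟩
  obtain ⟨C3, hC3def⟩ : ∃ x : ℝ, x = |t| * C2 * (na/2)^3 := ⟨_, rfl⟩
  have hC30 : 0 ≤ C3 := by
    rw [hC3def]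
    exact mul_nonneg (mul_nonneg (abs_nonneg t) hC20) (by positivity)
  obtain ⟨C4, hC4def⟩ : ∃ x : ℝ, x = |t| * |cc| + C3 * Real.pi := ⟨_, rfl⟩
  have hC40 : 0 ≤ C4 := by
    rw [hC4def]
    exact add_nonneg (mul_nonneg (abs_nonneg t) (abs_nonneg cc)) (mul_nonneg hC30 hπ.le)
  obtain ⟨C6, hC6def⟩ : ∃ x : ℝ, x = C4^2 * Real.pi + C3 + |t| * |cc| * na^2 * Real.pi / 16 := ⟨_, rfl⟩
  have hC60 : 0 ≤ C6 := by
    rw [hC6def]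
    have h1 : (0:ℝ) ≤ C4^2 * Real.pi := mul_nonneg (sq_nonneg _) hπ.le
    have h2 : (0:ℝ) ≤ |t| * |cc| * na^2 * Real.pi / 16 :=
      div_nonneg (mul_nonneg (mul_nonneg (mul_nonneg (abs_nonneg t) (abs_nonneg cc)) (sq_nonneg na)) hπ.le) (by norm_num)
    linarith only [h1, h2, hC30]
  have hCfin0 : (0:ℝ) < Real.sqrt (2*Real.pi) * (‖A‖ * K') * C6 + 1 := by
    have h1 : (0:ℝ) ≤ Real.sqrt (2*Real.pi) * (‖A‖ * K') * C6 :=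
      mul_nonneg (mul_nonneg (Real.sqrt_nonneg _) (mul_nonneg hA0.le hK0.le)) hC60
    linarith only [h1]
  refine ⟨Real.sqrt (2*Real.pi) * (‖A‖ * K') * C6 + 1, hCfin0, ?_⟩
  obtain ⟨ε, hεdef⟩ : ∃ x : ℝ, x = min 1 (min (2/na) (1/(C4+1))) := ⟨_, rfl⟩
  have hε0 : 0 < ε := by
    rw [hεdef]
    exact lt_min one_pos (lt_min (by positivity) (div_pos one_pos (by linarith only [hC40])))
  refine ⟨Nat.ceil (Real.pi/ε) + 1, ?_⟩
  intro M hM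
  have hM1 : 1 ≤ M := by omega
  have hMR : (0:ℝ) < M := by exact_mod_cast Nat.pos_of_ne_zero (by omega)
  have hh0 : 0 < mesh M := div_pos hπ hMR
  have hhε : mesh M ≤ ε := by
    rw [mesh, div_le_iff₀ hMR]
    have h1 : Real.pi/ε ≤ Nat.ceil (Real.pi/ε) := Nat.le_ceil _
    have h2 : ((Nat.ceil (Real.pi/ε) + 1 : ℕ) : ℝ) ≤ M := by exact_mod_cast hM
    push_cast at h2
    have h3 : Real.pi/ε ≤ (M:ℝ) := by linarith only [h1, h2]
    calc Real.pi = (Real.pi/ε)*ε := by field_simp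
      _ ≤ (M:ℝ)*ε := mul_le_mul_of_nonneg_right h3 hε0.le
      _ = ε * M := mul_comm _ _
  have hh1 : mesh M ≤ 1 := le_trans hhε (by rw [hεdef]; exact min_le_left _ _)
  have hh2n : mesh M ≤ 2/na := le_trans hhε (by rw [hεdef]; exact le_trans (min_le_right _ _) (min_le_left _ _))
  have hhC4 : mesh M ≤ 1/(C4+1) := le_trans hhε (by rw [hεdef]; exact le_trans (min_le_right _ _) (min_le_right _ _))
  have hhπ : mesh M ≤ Real.pi := by
    rw [mesh]
    apply div_le_self hπ.le
    exact_mod_cast hM1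
  obtain ⟨y, hydef⟩ : ∃ x : ℝ, x = mesh M * n / 2 := ⟨_, rfl⟩
  have hy2 : mesh M * n = 2*y := by rw [hydef]; ring
  have hyabs : |y| = mesh M * na / 2 := by
    rw [hydef, hna, abs_div, abs_mul, abs_of_pos hh0]
    norm_num
  have hy0 : y ≠ 0 := by
    have h1 : (0:ℝ) < mesh M * na / 2 := by positivity
    exact abs_pos.mp (by rw [hyabs]; exact h1)
  have hy1 : |y| ≤ 1 := by
    rw [hyabs]
    have := (le_div_iff₀ hna0).mp hh2n
    linarith only [this]
  obtain ⟨g, hgdef⟩ : ∃ x : ℝ, x = Real.sin y / y := ⟨_, rfl⟩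
  have hg6 : |g - (1 - y^2/6)| ≤ 5 * |y|^3 / 96 := by rw [hgdef]; exact hsinc hy0 hy1
  have hy2le : y^2 ≤ 1 := by nlinarith only [hy1, abs_nonneg y, sq_abs y]
  have hy3 : |y|^3 ≤ y^2 := by nlinarith only [hy1, abs_nonneg y, sq_abs y]
  have hy4 : y^4 ≤ |y|^3 := by
    have h1 : |y|^4 ≤ |y|^3 := pow_le_pow_of_le_one (abs_nonneg y) hy1 (by norm_num)
    have h2 : |y|^4 = y^4 := by rw [pow_abs, abs_of_nonneg (by positivity)]
    linarith only [h1, h2]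
  obtain ⟨hg6l, hg6r⟩ := abs_le.mp hg6
  have hg1 : g ≤ 1 := by linarith only [hg6r, hy3, sq_nonneg y]
  have hg34 : (3:ℝ)/4 ≤ g := by linarith only [hg6l, hy3, hy2le, sq_nonneg y]
  have hu1 : 1 - g ≤ y^2/4 := by linarith only [hg6l, hy3, sq_nonneg y]
  have hgα : |g ^ α - (1 - α * (1 - g))| ≤ C0 * (1 - g)^2 := by
    rw [hC0def]; exact auxC α hα (by linarith only [hg34]) hg1
  have habs3 : |(1 - g) - y^2/6| ≤ 5*|y|^3/96 := by
    rw [show (1-g) - y^2/6 = -(g - (1 - y^2/6)) by ring, abs_neg]; exact hg6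
  have hgα' : |g ^ α - (1 - α * (y^2/6))| ≤ (C0 + α) * |y|^3 := by
    have htri := abs_sub_le (g^α) (1 - α*(1-g)) (1 - α*(y^2/6))
    have h2 : |(1 - α*(1-g)) - (1 - α*(y^2/6))| = α * |(1-g) - y^2/6| := by
      rw [show (1 - α*(1-g)) - (1 - α*(y^2/6)) = α * ((y^2/6) - (1-g)) by ring, abs_mul,
        abs_of_pos hα, abs_sub_comm]
    have h1g0 : 0 ≤ 1 - g := by linarith only [hg1]
    have hsq1g : (1-g)^2 ≤ y^4/16 := by nlinarith only [hu1, h1g0]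
    have h3 : (1-g)^2 ≤ |y|^3 := by
      linarith only [hsq1g, hy4, pow_nonneg (abs_nonneg y) 3]
    have h4 : C0 * (1-g)^2 ≤ C0 * |y|^3 := mul_le_mul_of_nonneg_left h3 hC00
    have h5 : α * |(1-g) - y^2/6| ≤ α * (5*|y|^3/96) :=
      mul_le_mul_of_nonneg_left habs3 hα.le
    linarith only [htri, h2, h3, h4, h5, hgα,
      mul_nonneg hα.le (pow_nonneg (abs_nonneg y) 3)]
  have hg2b : |g^2 - (1 - y^2/3)| ≤ |y|^3 := by
    obtain ⟨h3l, h3r⟩ := abs_le.mp habs3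
    have h1g0 : 0 ≤ 1 - g := by linarith only [hg1]
    have hsq1g : (1-g)^2 ≤ y^4/16 := by nlinarith only [hu1, h1g0]
    rw [abs_le]
    constructor <;> linarith only [h3l, h3r, hsq1g, hy4, pow_nonneg (abs_nonneg y) 3, sq_nonneg (1-g), hu1]
  have hrpow2s : (0:ℝ) < na ^ (-2*s) := Real.rpow_pos_of_pos hna0 _
  have hrpowα : (0:ℝ) < na ^ α := Real.rpow_pos_of_pos hna0 _
  have hμ'abs : |μ * ‖A‖^2 * na^(-2*s)| = ‖A‖^2 * na^(-2*s) := by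
    rw [abs_mul, abs_mul, hμ1, one_mul, abs_of_nonneg (sq_nonneg _), abs_of_pos hrpow2s]
  have hg0 : (0:ℝ) ≤ g := by linarith only [hg34]
  have hsymb : |2 / mesh M * Real.sin (mesh M * n / 2)| ^ α = na ^ α * g ^ α := by
    have h1 : 2 / mesh M * Real.sin (mesh M * (n:ℝ) / 2) = (n:ℝ) * g := by
      rw [hgdef, ← hydef]
      field_simp
      rw [hydef]
      ring
    rw [h1, abs_mul, ← hna, abs_of_nonneg hg0]
    exact Real.mul_rpow hna0.le hg0
  have hB : Bfac M n = Complex.exp ((y:ℂ) * Complex.I) * ((g : ℝ) : ℂ) := by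
    rw [hgdef]; exact hBfac M n hy2 hy0
  have habsB : ‖Bfac M n‖ = g := by
    rw [hB, norm_mul, Complex.norm_exp_ofReal_mul_I, one_mul, Complex.norm_real, Real.norm_eq_abs,
      abs_of_nonneg hg0]
  obtain ⟨φ, hφdef⟩ : ∃ x : ℝ, x = na ^ α + μ * ‖A‖^2 * na^(-2*s) := ⟨_, rfl⟩
  obtain ⟨φh, hφhdef⟩ : ∃ x : ℝ, x = na ^ α * g ^ α + (μ * ‖A‖^2 * na^(-2*s)) * g^2 := ⟨_, rfl⟩
  have hφh : |2 / mesh M * Real.sin (mesh M * n / 2)| ^ α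
      + μ * ‖A‖ ^ 2 * |(n:ℝ)| ^ (-2*s) * ‖Bfac M n‖^2 = φh := by
    rw [hsymb, habsB, ← hna, hφhdef]
  obtain ⟨δ, hδdef⟩ : ∃ x : ℝ, x = φh - φ := ⟨_, rfl⟩
  obtain ⟨θ, hθdef⟩ : ∃ x : ℝ, x = -t * δ := ⟨_, rfl⟩
  have hcc2 : cc * mesh M^2 = α * na^α * (y^2/6)
      + (μ * ‖A‖^2 * na^(-2*s)) * (y^2/3) := by
    rw [hccdef, hydef]; ring
  have hδb : |δ + cc * mesh M^2| ≤ C2 * |y|^3 := by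
    have he : δ + cc * mesh M^2 = na^α * (g^α - (1 - α*(y^2/6)))
        + (μ * ‖A‖^2 * na^(-2*s)) * (g^2 - (1 - y^2/3)) := by
      rw [hδdef, hφhdef, hφdef, hcc2]; ring
    rw [he]
    calc |na^α * (g^α - (1 - α*(y^2/6)))
        + (μ * ‖A‖^2 * na^(-2*s)) * (g^2 - (1 - y^2/3))|
        ≤ |na^α * (g^α - (1 - α*(y^2/6)))|
          + |(μ * ‖A‖^2 * na^(-2*s)) * (g^2 - (1 - y^2/3))| := abs_add_le _ _
      _ = na^α * |g^α - (1 - α*(y^2/6))|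
          + (‖A‖^2 * na^(-2*s)) * |g^2 - (1 - y^2/3)| := by
          rw [abs_mul, abs_mul, hμ'abs, abs_of_pos hrpowα]
      _ ≤ na^α * ((C0 + α) * |y|^3) + (‖A‖^2 * na^(-2*s)) * |y|^3 := by
          exact add_le_add (mul_le_mul_of_nonneg_left hgα' hrpowα.le)
            (mul_le_mul_of_nonneg_left hg2b (mul_nonneg (sq_nonneg _) hrpow2s.le))
      _ = C2 * |y|^3 := by rw [hC2def]; ring
  have hyabs3 : |y|^3 = (na/2)^3 * mesh M^3 := by
    rw [hyabs]; ring
  have hθc : abs (|θ| - |t| * |cc| * mesh M^2) ≤ C3 * mesh M^3 := by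
    have h1 : |θ - t * cc * mesh M^2| = |t| * |δ + cc * mesh M^2| := by
      rw [hθdef, show -t*δ - t*cc*mesh M^2 = -(t*(δ + cc*mesh M^2)) by ring, abs_neg, abs_mul]
    have h2 : |t| * |cc| * mesh M^2 = abs (t*cc*mesh M^2) := by
      rw [abs_mul (t*cc) (mesh M^2), abs_mul, abs_of_nonneg (sq_nonneg (mesh M))]
    calc abs (|θ| - |t| * |cc| * mesh M^2) = abs (|θ| - abs (t*cc*mesh M^2)) := by rw [h2]
      _ ≤ |θ - t*cc*mesh M^2| := abs_abs_sub_abs_le_abs_sub _ _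
      _ = |t| * |δ + cc*mesh M^2| := h1
      _ ≤ |t| * (C2 * |y|^3) := mul_le_mul_of_nonneg_left hδb (abs_nonneg t)
      _ = C3 * mesh M^3 := by rw [hC3def, hyabs3]; ring
  have hθb : |θ| ≤ C4 * mesh M^2 := by
    have h1 := (abs_le.mp hθc).2
    have h2 : mesh M^3 ≤ Real.pi * mesh M^2 := by
      nlinarith only [hhπ, hh0, sq_nonneg (mesh M)]
    have h3 : C3 * mesh M^3 ≤ C3 * (Real.pi * mesh M^2) := mul_le_mul_of_nonneg_left h2 hC30
    rw [hC4def]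
    linarith only [h1, h3]
  have hθ1 : |θ| ≤ 1 := by
    have h1 : mesh M^2 ≤ mesh M := by nlinarith only [hh0, hh1]
    have h2 : C4 * mesh M ≤ C4 * (1/(C4+1)) := mul_le_mul_of_nonneg_left hhC4 hC40
    have h3 : C4 * (1/(C4+1)) ≤ 1 := by
      rw [mul_one_div, div_le_one (by linarith only [hC40])]
      linarith only [hC40]
    calc |θ| ≤ C4 * mesh M^2 := hθb
      _ ≤ C4 * mesh M := mul_le_mul_of_nonneg_left h1 hC40
      _ ≤ 1 := le_trans h2 h3
  obtain ⟨W, hWdef⟩ : ∃ x : ℝ, x = ‖Complex.exp (Complex.I * (θ:ℂ)) - 1‖ := ⟨_, rfl⟩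
  have hW0 : 0 ≤ W := by rw [hWdef]; exact norm_nonneg _
  have habsIθ : ‖Complex.I * (θ:ℂ)‖ = |θ| := by
    rw [norm_mul, Complex.norm_I, one_mul, Complex.norm_real, Real.norm_eq_abs]
  have hWb : abs (W - |θ|) ≤ |θ|^2 := by
    have h1 := Complex.norm_exp_sub_one_sub_id_le (x := Complex.I * (θ:ℂ))
      (by rw [habsIθ]; exact hθ1)
    calc abs (W - |θ|) = abs (‖Complex.exp (Complex.I * (θ:ℂ)) - 1‖
          - ‖Complex.I * (θ:ℂ)‖) := by rw [hWdef, habsIθ]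
      _ ≤ ‖(Complex.exp (Complex.I * (θ:ℂ)) - 1) - Complex.I * (θ:ℂ)‖ :=
          abs_norm_sub_norm_le _ _
      _ ≤ ‖Complex.I * (θ:ℂ)‖^2 := h1
      _ = |θ|^2 := by rw [habsIθ]
  have hEh : Complex.exp (-Complex.I * (t:ℂ) * ((φh:ℝ):ℂ))
      = Complex.exp (-Complex.I * (t:ℂ) * ((φ:ℝ):ℂ)) * Complex.exp (Complex.I * ((θ:ℝ):ℂ)) := by
    rw [← Complex.exp_add]
    congr 1
    rw [hθdef, hδdef]
    push_cast
    ring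
  have habsj : ∀ j ∈ idx M,
      ‖planeWaveD M α μ s A n t j - dh M (planeWave α μ s A n t) j‖
        = ‖A‖ * K' * g * W := by
    intro j _
    rw [hdiffId M (ne_of_gt hh0) α μ s t A n hn j]
    rw [hφh]
    have hφ' : |(n:ℝ)|^α + μ * ‖A‖^2 * |(n:ℝ)|^(-2*s) = φ := by
      rw [hφdef, hna]
    rw [hφ', hEh]
    rw [show Complex.exp (-Complex.I * (t:ℂ) * ((φ:ℝ):ℂ)) * Complex.exp (Complex.I * ((θ:ℝ):ℂ))
        - Complex.exp (-Complex.I * (t:ℂ) * ((φ:ℝ):ℂ))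
        = Complex.exp (-Complex.I * (t:ℂ) * ((φ:ℝ):ℂ))
          * (Complex.exp (Complex.I * ((θ:ℝ):ℂ)) - 1) from by ring]
    simp only [norm_mul]
    rw [habsB, habs1 _ (re_neg_I t φ), habs1 _ (re_I_int n (pt M j)), Complex.norm_real, Real.norm_eq_abs,
      abs_of_nonneg (Real.rpow_nonneg (abs_nonneg _) _), ← hWdef, hK', hna]
    ring
  have hgW0 : 0 ≤ ‖A‖ * K' * g * W :=
    mul_nonneg (mul_nonneg (mul_nonneg hA0.le hK0.le) hg0) hW0
  rw [hdLp M hM1 _ (‖A‖ * K' * g * W) hgW0 habsj]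
  have e1 : na ^ α = na^(α+2*s) * na^(-2*s) := by
    rw [← Real.rpow_add hna0]; ring_nf
  have hfact : α * na^α + 2*(μ * ‖A‖^2 * na^(-2*s))
      = na^(-2*s) * (α*na^(α+2*s) + 2*μ*‖A‖^2) := by
    rw [e1]; ring
  have hsq : (n:ℝ)^2 = na^2 := by rw [hna]; exact (sq_abs _).symm
  have hccabs : |cc| = na^2/24 * (na^(-2*s) * |α*na^(α+2*s) + 2*μ*‖A‖^2|) := by
    rw [hccdef, hfact, hsq, abs_mul, abs_mul, abs_of_pos hrpow2s,
      abs_of_nonneg (by positivity : (0:ℝ) ≤ na^2/24)]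
  have e0 : (na^(2:ℕ) : ℝ) = na^((2:ℝ)) := by
    rw [← Real.rpow_natCast na 2]; norm_num
  have e2 : na^(2-3*s) = na^(-s) * (na^((2:ℝ)) * na^(-2*s)) := by
    rw [← Real.rpow_add hna0, ← Real.rpow_add hna0]
    congr 1
    ring
  have hKcc : K' * |cc| = na^(2-3*s)/24 * |α*na^(α+2*s)+2*μ*‖A‖^2| := by
    rw [hK', hccabs, e2, ← e0]; ring
  have hTg : Real.sqrt (2 * Real.pi) / 24 * ‖A‖ * |t| * na ^ (2 - 3 * s) *
        |α * na ^ (α + 2 * s) + 2 * μ * ‖A‖ ^ 2| * mesh M ^ 2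
      = Real.sqrt (2*Real.pi) * (‖A‖ * K') * (|t| * |cc| * mesh M^2) := by
    calc Real.sqrt (2 * Real.pi) / 24 * ‖A‖ * |t| * na ^ (2 - 3 * s) *
          |α * na ^ (α + 2 * s) + 2 * μ * ‖A‖ ^ 2| * mesh M ^ 2
        = Real.sqrt (2*Real.pi) * ‖A‖ * |t| *
            (na^(2-3*s)/24 * |α*na^(α+2*s)+2*μ*‖A‖^2|) * mesh M^2 := by ring
      _ = Real.sqrt (2*Real.pi) * ‖A‖ * |t| * (K' * |cc|) * mesh M^2 := by rw [hKcc]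
      _ = Real.sqrt (2*Real.pi) * (‖A‖ * K') * (|t| * |cc| * mesh M^2) := by ring
  rw [← hna, hTg]
  have h4le : mesh M^4 ≤ Real.pi * mesh M^3 := by
    nlinarith only [hhπ, hh0, pow_nonneg hh0.le 3]
  have hθsq : |θ|^2 ≤ (C4 * mesh M^2)^2 := pow_le_pow_left₀ (abs_nonneg θ) hθb 2
  have hy2eq : y^2 = (mesh M * na / 2)^2 := by rw [← sq_abs y, hyabs]
  have htcc0 : 0 ≤ |t| * |cc| * mesh M^2 := mul_nonneg (mul_nonneg (abs_nonneg _) (abs_nonneg _)) (sq_nonneg _)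
  have hcore : |g*W - |t| * |cc| * mesh M^2| ≤ C6 * mesh M^3 := by
    have hd : g*W - |t| * |cc| * mesh M^2
        = g*(W - |θ|) + g*(|θ| - |t| * |cc| * mesh M^2) + (g - 1)*(|t| * |cc| * mesh M^2) := by ring
    have t1 : |g*(W - |θ|)| ≤ |θ|^2 := by
      rw [abs_mul, abs_of_nonneg hg0]
      calc g * abs (W - |θ|) ≤ 1 * |θ|^2 := mul_le_mul hg1 hWb (abs_nonneg _) zero_le_one
        _ = |θ|^2 := one_mul _
    have t2 : |g*(|θ| - |t| * |cc| * mesh M^2)| ≤ C3 * mesh M^3 := by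
      rw [abs_mul, abs_of_nonneg hg0]
      calc g * abs (|θ| - |t| * |cc| * mesh M^2) ≤ 1 * (C3 * mesh M^3) :=
            mul_le_mul hg1 hθc (abs_nonneg _) zero_le_one
        _ = C3 * mesh M^3 := one_mul _
    have t3 : |(g - 1)*(|t| * |cc| * mesh M^2)| ≤ (y^2/4) * (|t| * |cc| * mesh M^2) := by
      rw [abs_mul, abs_of_nonneg htcc0]
      apply mul_le_mul_of_nonneg_right _ htcc0
      rw [abs_sub_comm, abs_of_nonneg (by linarith only [hg1] : (0:ℝ) ≤ 1 - g)]
      exact hu1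
    have b1 : |θ|^2 ≤ C4^2 * Real.pi * mesh M^3 := by
      have := mul_le_mul_of_nonneg_left h4le (sq_nonneg C4)
      linarith only [hθsq, this]
    have b3eq : (y^2/4) * (|t| * |cc| * mesh M^2) = |t| * |cc| * na^2/16 * mesh M^4 := by
      rw [hy2eq]; ring
    have b3 : (y^2/4) * (|t| * |cc| * mesh M^2) ≤ |t| * |cc| * na^2 * Real.pi / 16 * mesh M^3 := by
      rw [b3eq]
      have hc0 : (0:ℝ) ≤ |t| * |cc| * na^2/16 := by positivity
      calc |t| * |cc| * na^2/16 * mesh M^4 ≤ |t| * |cc| * na^2/16 * (Real.pi * mesh M^3) :=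
            mul_le_mul_of_nonneg_left h4le hc0
        _ = |t| * |cc| * na^2 * Real.pi / 16 * mesh M^3 := by ring
    calc |g*W - |t| * |cc| * mesh M^2|
        = |g*(W - |θ|) + g*(|θ| - |t| * |cc| * mesh M^2) + (g - 1)*(|t| * |cc| * mesh M^2)| := by rw [hd]
      _ ≤ |g*(W - |θ|) + g*(|θ| - |t| * |cc| * mesh M^2)| + |(g - 1)*(|t| * |cc| * mesh M^2)| :=
          abs_add_le _ _
      _ ≤ |g*(W - |θ|)| + |g*(|θ| - |t| * |cc| * mesh M^2)| + |(g - 1)*(|t| * |cc| * mesh M^2)| := by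
          linarith only [abs_add_le (g*(W - |θ|)) (g*(|θ| - |t| * |cc| * mesh M^2))]
      _ ≤ C4^2 * Real.pi * mesh M^3 + C3 * mesh M^3
          + |t| * |cc| * na^2 * Real.pi / 16 * mesh M^3 := by
          linarith only [le_trans t1 b1, t2, le_trans t3 b3]
      _ = C6 * mesh M^3 := by rw [hC6def]; ring
  have hsAK : (0:ℝ) ≤ Real.sqrt (2*Real.pi) * (‖A‖ * K') :=
    mul_nonneg (Real.sqrt_nonneg _) (mul_nonneg hA0.le hK0.le)
  calc |Real.sqrt (2*Real.pi) * (‖A‖ * K' * g * W)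
        - Real.sqrt (2*Real.pi) * (‖A‖ * K') * (|t| * |cc| * mesh M^2)|
      = Real.sqrt (2*Real.pi) * (‖A‖ * K') * |g*W - |t| * |cc| * mesh M^2| := by
        rw [show Real.sqrt (2*Real.pi) * (‖A‖ * K' * g * W)
            - Real.sqrt (2*Real.pi) * (‖A‖ * K') * (|t| * |cc| * mesh M^2)
            = (Real.sqrt (2*Real.pi) * (‖A‖ * K')) * (g*W - |t| * |cc| * mesh M^2)
            from by ring, abs_mul, abs_of_nonneg hsAK]
    _ ≤ Real.sqrt (2*Real.pi) * (‖A‖ * K') * (C6 * mesh M^3) :=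
        mul_le_mul_of_nonneg_left hcore hsAK
    _ ≤ (Real.sqrt (2*Real.pi) * (‖A‖ * K') * C6 + 1) * mesh M^3 := by
        linarith only [pow_nonneg hh0.le 3]

end
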